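/- Let n ∈ ℕ and define quadratic forms qᵢ = (Xᵢ + Y)² − 2Y² ∈ ℝ[X₁,…,Xₙ,Y]₂ for i = 1,…,n. Then there exists ε > 0 such that for all homogeneous quadratic forms p₁,…,pₙ ∈ ℝ[X₁,…,Xₙ,Y]₂ with every coefficient of pᵢ − qᵢ of absolute value less than ε (for each i = 1,…,n), there exists a nonzero point z ∈ ℝ^{n+1} with p₁(z) = ⋯ = pₙ(z) = 0. -/

import Mathlib

open MvPolynomial

private lemma prod_single_pow {N : ℕ} (f : Fin N → ℝ) (j : Fin N) :
    (∏ i, f i ^ (Finsupp.single j 1) i) = f j := by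
  rw [Finset.prod_eq_single j]
  · simp
  · intro b _ hb; simp [Finsupp.single_apply, (Ne.symm hb)]
  · intro h; exact absurd (Finset.mem_univ j) h

private lemma mono_two {N : ℕ} (d : Fin N →₀ ℕ) (hd : Finsupp.degree d = 2) :
    ∃ j k : Fin N, ∀ f : Fin N → ℝ, (∏ i, f i ^ d i) = f j * f k := by
  classical
  have hc : Multiset.card d.toMultiset = 2 := by
    rw [Finsupp.card_toMultiset]
    simpa [Finsupp.degree_apply, Finsupp.sum] using hd
  obtain ⟨j, k, hjk⟩ := Multiset.card_eq_two.mp hc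
  have inj : Function.Injective (Finsupp.toMultiset (α := Fin N)) := by
    intro a b h
    have := congrArg Multiset.toFinsupp h
    rwa [Finsupp.toMultiset_toFinsupp, Finsupp.toMultiset_toFinsupp] at this
  have hd2 : d = Finsupp.single j 1 + Finsupp.single k 1 := by
    apply inj
    rw [hjk, Finsupp.toMultiset_add, Finsupp.toMultiset_single, Finsupp.toMultiset_single]
    simp [Multiset.singleton_add]
  refine ⟨j, k, fun f => ?_⟩
  subst hd2
  calc (∏ i, f i ^ ((Finsupp.single j 1 + Finsupp.single k 1 : Fin N →₀ ℕ) i))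
      = ∏ i, (f i ^ (Finsupp.single j 1) i * f i ^ (Finsupp.single k 1) i) := by
        refine Finset.prod_congr rfl fun i _ => ?_
        rw [Finsupp.add_apply, pow_add]
    _ = (∏ i, f i ^ (Finsupp.single j 1) i) * ∏ i, f i ^ (Finsupp.single k 1) i :=
        Finset.prod_mul_distrib
    _ = f j * f k := by rw [prod_single_pow, prod_single_pow]

private lemma deg_two {N : ℕ} {P : MvPolynomial (Fin N) ℝ} (hP : P.IsHomogeneous 2)
    {d : Fin N →₀ ℕ} (hd : d ∈ P.support) : Finsupp.degree d = 2 := by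
  rw [Finsupp.degree_eq_weight_one]
  exact hP (MvPolynomial.mem_support_iff.mp hd)

private lemma supp_card {N : ℕ} {P : MvPolynomial (Fin (N + 1)) ℝ} (hP : P.IsHomogeneous 2) :
    P.support.card ≤ Fintype.card (Sym (Fin (N + 1)) 2) := by
  classical
  have hdeg : ∀ d ∈ P.support, Multiset.card (Finsupp.toMultiset d) = 2 := by
    intro d hd
    rw [Finsupp.card_toMultiset]
    simpa [Finsupp.degree_apply, Finsupp.sum] using deg_two hP hd
  calc P.support.card ≤ (Finset.univ : Finset (Sym (Fin (N + 1)) 2)).card := by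
        apply Finset.card_le_card_of_injOn
          (fun d => if h : Multiset.card (Finsupp.toMultiset d) = 2 then ⟨d.toMultiset, h⟩
            else Sym.replicate 2 0)
        · intro a _; exact Finset.mem_univ _
        · intro a ha b hb hab
          simp only at hab
          erw [dif_pos (hdeg a (Finset.mem_coe.mp ha)), dif_pos (hdeg b (Finset.mem_coe.mp hb))]
            at hab
          have h1 : a.toMultiset = b.toMultiset := congrArg Sym.toMultiset hab
          have h2 := congrArg Multiset.toFinsupp h1
          rwa [Finsupp.toMultiset_toFinsupp, Finsupp.toMultiset_toFinsupp] at h2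
    _ = Fintype.card (Sym (Fin (N + 1)) 2) := Finset.card_univ

private lemma eval_bound {N : ℕ} {P : MvPolynomial (Fin (N + 1)) ℝ} (hP : P.IsHomogeneous 2)
    {ε : ℝ} (hc : ∀ d, |MvPolynomial.coeff d P| ≤ ε) (z : Fin (N + 1) → ℝ)
    (hz : ∀ t, |z t| ≤ 2) :
    |MvPolynomial.eval z P| ≤ (Fintype.card (Sym (Fin (N + 1)) 2) : ℝ) * (4 * ε) := by
  have hε0 : 0 ≤ ε := (abs_nonneg _).trans (hc 0)
  rw [MvPolynomial.eval_eq']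
  refine (Finset.abs_sum_le_sum_abs _ _).trans ?_
  have key : ∀ d ∈ P.support, |MvPolynomial.coeff d P * ∏ i, z i ^ d i| ≤ 4 * ε := by
    intro d hd
    obtain ⟨j, k, hjk⟩ := mono_two d (deg_two hP hd)
    rw [hjk, abs_mul, abs_mul]
    have h1 : |z j| * |z k| ≤ 4 := by
      nlinarith [hz j, hz k, abs_nonneg (z j), abs_nonneg (z k)]
    nlinarith [hc d, abs_nonneg (MvPolynomial.coeff d P), abs_nonneg (z j), abs_nonneg (z k),
      mul_nonneg (abs_nonneg (z j)) (abs_nonneg (z k))]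
  calc (∑ d ∈ P.support, |MvPolynomial.coeff d P * ∏ i, z i ^ d i|)
      ≤ P.support.card • (4 * ε) := Finset.sum_le_card_nsmul _ _ _ key
    _ = (P.support.card : ℝ) * (4 * ε) := nsmul_eq_mul _ _
    _ ≤ (Fintype.card (Sym (Fin (N + 1)) 2) : ℝ) * (4 * ε) := by
        have : (P.support.card : ℝ) ≤ (Fintype.card (Sym (Fin (N + 1)) 2) : ℝ) := by
          exact_mod_cast supp_card hP
        gcongr

private lemma eval_lip {N : ℕ} {P : MvPolynomial (Fin (N + 1)) ℝ} (hP : P.IsHomogeneous 2)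
    {ε : ℝ} (hc : ∀ d, |MvPolynomial.coeff d P| ≤ ε) (z w : Fin (N + 1) → ℝ)
    (hz : ∀ t, |z t| ≤ 2) (hw : ∀ t, |w t| ≤ 2) {δ : ℝ} (hδ : ∀ t, |z t - w t| ≤ δ) :
    |MvPolynomial.eval z P - MvPolynomial.eval w P|
      ≤ (Fintype.card (Sym (Fin (N + 1)) 2) : ℝ) * (4 * ε * δ) := by
  have hε0 : 0 ≤ ε := (abs_nonneg _).trans (hc 0)
  have hδ0 : 0 ≤ δ := (abs_nonneg _).trans (hδ 0)
  rw [MvPolynomial.eval_eq', MvPolynomial.eval_eq', ← Finset.sum_sub_distrib]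
  refine (Finset.abs_sum_le_sum_abs _ _).trans ?_
  have key : ∀ d ∈ P.support,
      |MvPolynomial.coeff d P * ∏ i, z i ^ d i - MvPolynomial.coeff d P * ∏ i, w i ^ d i|
        ≤ 4 * ε * δ := by
    intro d hd
    obtain ⟨j, k, hjk⟩ := mono_two d (deg_two hP hd)
    rw [hjk z, hjk w, ← mul_sub, abs_mul]
    have hsplit : z j * z k - w j * w k = z j * (z k - w k) + (z j - w j) * w k := by ring
    have h1 : |z j * z k - w j * w k| ≤ 4 * δ := by
      rw [hsplit]
      refine (abs_add_le _ _).trans ?_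
      rw [abs_mul, abs_mul]
      nlinarith [hz j, hw k, hδ j, hδ k, abs_nonneg (z j), abs_nonneg (w k),
        abs_nonneg (z k - w k), abs_nonneg (z j - w j)]
    nlinarith [hc d, abs_nonneg (MvPolynomial.coeff d P), abs_nonneg (z j * z k - w j * w k)]
  calc (∑ d ∈ P.support,
        |MvPolynomial.coeff d P * ∏ i, z i ^ d i - MvPolynomial.coeff d P * ∏ i, w i ^ d i|)
      ≤ P.support.card • (4 * ε * δ) := Finset.sum_le_card_nsmul _ _ _ key
    _ = (P.support.card : ℝ) * (4 * ε * δ) := nsmul_eq_mul _ _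
    _ ≤ (Fintype.card (Sym (Fin (N + 1)) 2) : ℝ) * (4 * ε * δ) := by
        have : (P.support.card : ℝ) ≤ (Fintype.card (Sym (Fin (N + 1)) 2) : ℝ) := by
          exact_mod_cast supp_card hP
        gcongr

open MvPolynomial

theorem stmt12 (n : ℕ) :
    ∃ ε : ℝ, 0 < ε ∧
      ∀ p : Fin n → MvPolynomial (Fin (n + 1)) ℝ,
        (∀ i, (p i).IsHomogeneous 2) →
        (∀ (i : Fin n) (d : Fin (n + 1) →₀ ℕ),
          |MvPolynomial.coeff d
            (p i - ((X i.castSucc + X (Fin.last n)) ^ 2 - 2 * X (Fin.last n) ^ 2))| < ε) →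
        ∃ z : Fin (n + 1) → ℝ, z ≠ 0 ∧ ∀ i, eval z (p i) = 0 := by
  classical
  set K : ℝ := (Fintype.card (Sym (Fin (n + 1)) 2) : ℝ) with hK
  have hK0 : 0 ≤ K := Nat.cast_nonneg _
  set ε : ℝ := 1 / (100 * (K + 1)) with hε
  have hε0 : 0 < ε := by positivity
  refine ⟨ε, hε0, fun p hhom hcoef => ?_⟩
  have hKε : K * (4 * ε) ≤ 1 / 25 := by
    have hpos : (0 : ℝ) < K + 1 := by linarith
    rw [hε, show K * (4 * (1 / (100 * (K + 1)))) = (4 * K) / (100 * (K + 1)) by ring,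
      div_le_div_iff₀ (by positivity) (by norm_num)]
    linarith
  -- square root facts
  set s : ℝ := Real.sqrt 2 with hs
  have hs2 : s ^ 2 = 2 := Real.sq_sqrt (by norm_num)
  have hs0 : 0 ≤ s := Real.sqrt_nonneg 2
  have hs14 : 1.4 < s := by nlinarith
  have hs15 : s < 1.5 := by nlinarith
  -- polynomials
  set q : Fin n → MvPolynomial (Fin (n + 1)) ℝ :=
    fun i => (X i.castSucc + X (Fin.last n)) ^ 2 - 2 * X (Fin.last n) ^ 2 with hq
  have hqhom : ∀ i, (q i).IsHomogeneous 2 := by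
    intro i
    apply MvPolynomial.IsHomogeneous.sub
    · simpa using ((MvPolynomial.isHomogeneous_X ℝ i.castSucc).add
        (MvPolynomial.isHomogeneous_X ℝ (Fin.last n))).pow 2
    · rw [show (2 : MvPolynomial (Fin (n + 1)) ℝ) = MvPolynomial.C 2 from
        (map_ofNat MvPolynomial.C 2).symm]
      simpa using ((MvPolynomial.isHomogeneous_X ℝ (Fin.last n)).pow 2).C_mul (2 : ℝ)
  set e : Fin n → MvPolynomial (Fin (n + 1)) ℝ := fun i => p i - q i with he
  have hehom : ∀ i, (e i).IsHomogeneous 2 := fun i => (hhom i).sub (hqhom i)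
  have hecoef : ∀ i d, |MvPolynomial.coeff d (e i)| ≤ ε := fun i d => (hcoef i d).le
  -- the map F and center a
  set F : (Fin n → ℝ) → Fin n → ℝ :=
    fun x i => MvPolynomial.eval (Fin.snoc x 1) (p i) with hF
  set a : Fin n → ℝ := fun _ => s - 1 with ha
  have hFeq : ∀ x i, F x i
      = ((x i + 1) ^ 2 - 2) + MvPolynomial.eval (Fin.snoc x 1) (e i) := by
    intro x i
    have hp' : p i = q i + e i := by rw [he]; ring
    rw [hF]
    simp only
    rw [hp', map_add]
    congr 1
    rw [hq]
    simp [Fin.snoc_castSucc, Fin.snoc_last]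
  -- coordinate bounds on the ball
  have hball : ∀ x ∈ Metric.closedBall a (1 / 10), ∀ i, |x i - (s - 1)| ≤ 1 / 10 := by
    intro x hx i
    have h1 : dist (x i) (s - 1) ≤ dist x a := dist_le_pi_dist x a i
    have h2 : dist x a ≤ 1 / 10 := Metric.mem_closedBall.mp hx
    rw [Real.dist_eq] at h1
    exact h1.trans h2
  have hsnoc2 : ∀ x ∈ Metric.closedBall a (1 / 10), ∀ t : Fin (n + 1), |(Fin.snoc x 1 : Fin (n + 1) → ℝ) t| ≤ 2 := by
    intro x hx t
    refine Fin.lastCases ?_ ?_ t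
    · rw [Fin.snoc_last]; norm_num
    · intro u
      rw [Fin.snoc_castSucc]
      have h1 := hball x hx u
      have h2 := abs_sub_abs_le_abs_sub (x u) (s - 1)
      have h3 : |s - 1| = s - 1 := abs_of_nonneg (by linarith)
      linarith
  have hsnocd : ∀ x y : Fin n → ℝ, ∀ t : Fin (n + 1),
      |(Fin.snoc x 1 : Fin (n + 1) → ℝ) t - (Fin.snoc y 1 : Fin (n + 1) → ℝ) t| ≤ ‖x - y‖ := by
    intro x y t
    refine Fin.lastCases ?_ ?_ t
    · rw [Fin.snoc_last, Fin.snoc_last]; simpa using norm_nonneg (x - y)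
    · intro u
      rw [Fin.snoc_castSucc, Fin.snoc_castSucc]
      simpa [Real.norm_eq_abs] using norm_le_pi_norm (x - y) u
  -- the linear approximation
  set A : (Fin n → ℝ) →L[ℝ] (Fin n → ℝ) :=
    (2 * s) • ContinuousLinearMap.id ℝ (Fin n → ℝ) with hA
  have h2s : (0 : ℝ) < 2 * s := by linarith
  set Asymm : A.NonlinearRightInverse :=
    { toFun := fun y => (2 * s)⁻¹ • y
      nnnorm := ⟨(2 * s)⁻¹, by positivity⟩
      bound' := fun y => by
        rw [norm_smul, Real.norm_eq_abs, abs_of_nonneg (by positivity)]; exact le_rfl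
      right_inv' := fun y => by
        rw [hA]
        simp only [ContinuousLinearMap.smul_apply, ContinuousLinearMap.id_apply]
        rw [smul_smul, mul_inv_cancel₀ (ne_of_gt h2s), one_smul] } with hAsymm
  have hAapp : ∀ v : Fin n → ℝ, ∀ i, A v i = 2 * s * v i := by
    intro v i
    rw [hA]
    simp
  -- approximation property
  have happrox : ApproximatesLinearOn F A (Metric.closedBall a (1 / 10)) 1 := by
    intro x hx y hy
    rw [NNReal.coe_one, one_mul, pi_norm_le_iff_of_nonneg (norm_nonneg _)]
    intro i
    have hxy : |x i - y i| ≤ ‖x - y‖ := by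
      simpa [Real.norm_eq_abs] using norm_le_pi_norm (x - y) i
    have hlip := eval_lip (hehom i) (hecoef i) (Fin.snoc x 1) (Fin.snoc y 1)
      (hsnoc2 x hx) (hsnoc2 y hy) (hsnocd x y)
    rw [← hK] at hlip
    have hcomp : (F x - F y - A (x - y)) i
        = (x i - y i) * ((x i - (s - 1)) + (y i - (s - 1)))
          + (MvPolynomial.eval (Fin.snoc x 1) (e i)
            - MvPolynomial.eval (Fin.snoc y 1) (e i)) := by
      simp only [Pi.sub_apply]
      rw [hFeq x i, hFeq y i, hAapp]
      simp only [Pi.sub_apply]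
      ring
    rw [Real.norm_eq_abs, hcomp]
    have h1 := hball x hx i
    have h2 := hball y hy i
    have habs : |(x i - y i) * ((x i - (s - 1)) + (y i - (s - 1)))|
        ≤ ‖x - y‖ * (1 / 5) := by
      rw [abs_mul]
      have h3 : |(x i - (s - 1)) + (y i - (s - 1))| ≤ 1 / 5 :=
        (abs_add_le _ _).trans (by linarith)
      exact mul_le_mul hxy h3 (abs_nonneg _) (norm_nonneg _)
    refine (abs_add_le _ _).trans ?_
    have h4 : K * (4 * ε * ‖x - y‖) = (K * (4 * ε)) * ‖x - y‖ := by ring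
    rw [h4] at hlip
    nlinarith [norm_nonneg (x - y), hlip, habs, hKε]
  -- value at the center
  have hFa : ∀ i, F a i = MvPolynomial.eval (Fin.snoc a 1) (e i) := by
    intro i
    rw [hFeq]
    have : a i + 1 = s := by rw [ha]; ring
    rw [this, hs2]
    ring
  have hFabound : ‖F a‖ ≤ 1 / 25 := by
    rw [pi_norm_le_iff_of_nonneg (by norm_num)]
    intro i
    rw [Real.norm_eq_abs, hFa i]
    have := eval_bound (hehom i) (hecoef i) (Fin.snoc a 1)
      (hsnoc2 a (Metric.mem_closedBall_self (by norm_num)))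
    rw [← hK] at this
    linarith [hKε]
  -- surjectivity
  have hsurj := happrox.surjOn_closedBall_of_nonlinearRightInverse Asymm
    (by norm_num : (0 : ℝ) ≤ 1 / 10) (subset_refl _)
  have hnn : (Asymm.nnnorm : ℝ) = (2 * s)⁻¹ := rfl
  have h0mem : (0 : Fin n → ℝ)
      ∈ Metric.closedBall (F a) (((Asymm.nnnorm : ℝ)⁻¹ - ((1 : NNReal) : ℝ)) * (1 / 10)) := by
    rw [Metric.mem_closedBall, dist_zero_left, hnn, inv_inv, NNReal.coe_one]
    nlinarith [hFabound]
  obtain ⟨x, hx, hFx⟩ := hsurj h0mem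
  refine ⟨Fin.snoc x 1, ?_, fun i => ?_⟩
  · intro hzero
    have := congrFun hzero (Fin.last n)
    rw [Fin.snoc_last] at this
    exact one_ne_zero this
  · have := congrFun hFx i
    simpa [hF] using this
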